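/- Let W be an SW-deterministic, aperiodic Wang tile set and T = T(W) the associated automaton. If W admits a ℤ²-tiling, then there exists an ω-word ξ over the color alphabet whose orbit under the automaton action is infinite. -/

import Mathlib

/-- A Wang tile over a set of colors `C`. -/
structure WangTile (C : Type*) where
  west : C
  south : C
  east : C
  north : C
deriving DecidableEq

variable {C : Type*}

/-- `f` is a valid tiling of the discrete plane `ℤ²` by the tile set `W`. -/
def IsZTiling (W : Finset (WangTile C)) (f : ℤ × ℤ → WangTile C) : Prop :=
  ∀ x y : ℤ, f (x, y) ∈ W ∧ (f (x, y)).east = (f (x + 1, y)).west ∧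
    (f (x, y)).north = (f (x, y + 1)).south

/-- `g` is a valid tiling of the first quadrant `ℕ²` by the tile set `W`. -/
def IsNTiling (W : Finset (WangTile C)) (g : ℕ × ℕ → WangTile C) : Prop :=
  ∀ x y : ℕ, g (x, y) ∈ W ∧ (g (x, y)).east = (g (x + 1, y)).west ∧
    (g (x, y)).north = (g (x, y + 1)).south

/-- A `ℤ²`-tiling is periodic if it has a nonzero periodicity vector. -/
def PeriodicTiling (f : ℤ × ℤ → WangTile C) : Prop :=
  ∃ v : ℤ × ℤ, v ≠ 0 ∧ ∀ t : ℤ × ℤ, f (t + v) = f t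

/-- An `ℕ²`-tiling is y-recurrent if two distinct rows have the same horizontal word
(sequence of south colors). -/
def YRecurrent (g : ℕ × ℕ → WangTile C) : Prop :=
  ∃ i j : ℕ, i ≠ j ∧ ∀ x : ℕ, (g (x, i)).south = (g (x, j)).south

/-- `W` is SW-deterministic: each tile is determined by its south and west colors. -/
def SWDet (W : Finset (WangTile C)) : Prop :=
  ∀ t ∈ W, ∀ t' ∈ W, t.south = t'.south → t.west = t'.west → t = t'

/-- One step of the action of the automaton `T(W)` on ω-words: `η` is obtained from `ξ` by
applying some state, i.e. there is a right-infinite row of matching tiles of `W` whose south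
colors spell `ξ` and whose north colors spell `η`. -/
def RowStep (W : Finset (WangTile C)) (ξ η : ℕ → C) : Prop :=
  ∃ r : ℕ → WangTile C, (∀ n, r n ∈ W) ∧ (∀ n, (r n).south = ξ n) ∧
    (∀ n, (r n).north = η n) ∧ ∀ n, (r n).east = (r (n + 1)).west

private lemma emod_succ_aux (n q : ℤ) (hq : 0 < q) :
    (n + 1) % q = if n % q = q - 1 then 0 else n % q + 1 := by
  have h0 : 0 ≤ n % q := Int.emod_nonneg n (by omega)
  have h1 : n % q < q := Int.emod_lt_of_pos n hq
  have key : (n + 1) % q = (n % q + 1) % q := by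
    conv_lhs => rw [← Int.emod_add_mul_ediv n q]
    rw [show n % q + q * (n / q) + 1 = n % q + 1 + q * (n / q) by ring,
      Int.add_mul_emod_self_left]
  rw [key]
  split_ifs with h
  · rw [h]; simp
  · exact Int.emod_eq_of_lt (by omega) (by omega)

private lemma periodic_of_repeat {C : Type*} (W : Finset (WangTile C)) (f : ℤ × ℤ → WangTile C)
    (hf : IsZTiling W f) (i j x1 x2 : ℤ) (hij : i < j) (hx : x1 < x2) (hx1 : 0 ≤ x1)
    (hrow : ∀ n : ℤ, 0 ≤ n → (f (n, i)).south = (f (n, j)).south)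
    (hcol : ∀ y : ℤ, i ≤ y → y < j → f (x1, y) = f (x2, y)) :
    ∃ h : ℤ × ℤ → WangTile C, IsZTiling W h ∧ PeriodicTiling h := by
  set p := j - i with hp
  set q := x2 - x1 with hq
  have hp0 : 0 < p := by omega
  have hq0 : 0 < q := by omega
  refine ⟨fun t => f (x1 + (t.1 - x1) % q, i + (t.2 - i) % p), ?_,
    ⟨(q, 0), by simp [Prod.ext_iff]; omega, ?_⟩⟩
  · intro x y
    have ha0 : 0 ≤ (x - x1) % q := Int.emod_nonneg _ (by omega)
    have ha1 : (x - x1) % q < q := Int.emod_lt_of_pos _ hq0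
    have hb0 : 0 ≤ (y - i) % p := Int.emod_nonneg _ (by omega)
    have hb1 : (y - i) % p < p := Int.emod_lt_of_pos _ hp0
    dsimp only
    refine ⟨(hf _ _).1, ?_, ?_⟩
    · rw [show x + 1 - x1 = (x - x1) + 1 by ring, emod_succ_aux _ _ hq0]
      split_ifs with hc
      · rw [hc]
        have e1 := (hf (x1 + (q - 1)) (i + (y - i) % p)).2.1
        rw [e1, show x1 + (q - 1) + 1 = x2 by omega,
          ← hcol (i + (y - i) % p) (by omega) (by omega)]
        norm_num
      · have e1 := (hf (x1 + (x - x1) % q) (i + (y - i) % p)).2.1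
        rw [e1, show x1 + (x - x1) % q + 1 = x1 + ((x - x1) % q + 1) by ring]
    · rw [show y + 1 - i = (y - i) + 1 by ring, emod_succ_aux _ _ hp0]
      split_ifs with hc
      · rw [hc]
        have e1 := (hf (x1 + (x - x1) % q) (i + (p - 1))).2.2
        rw [e1, show i + (p - 1) + 1 = j by omega,
          ← hrow (x1 + (x - x1) % q) (by omega)]
        norm_num
      · have e1 := (hf (x1 + (x - x1) % q) (i + (y - i) % p)).2.2
        rw [e1, show i + (y - i) % p + 1 = i + ((y - i) % p + 1) by ring]
  · intro t
    dsimp only [Prod.fst_add, Prod.snd_add]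
    rw [show t.1 + q - x1 = (t.1 - x1) + q * 1 by ring, Int.add_mul_emod_self_left,
      show t.2 + 0 - i = t.2 - i by ring]

/-- If an SW-deterministic, aperiodic Wang tile set admits a `ℤ²`-tiling, then some ω-word
over the colors has an infinite orbit under the action of the associated automaton. -/
theorem stmt13 (W : Finset (WangTile C)) (hsw : SWDet W)
    (haper : ∀ f : ℤ × ℤ → WangTile C, IsZTiling W f → ¬ PeriodicTiling f)
    (f : ℤ × ℤ → WangTile C) (hf : IsZTiling W f) :
    ∃ ξ : ℕ → C, {η | Relation.ReflTransGen (RowStep W) ξ η}.Infinite := by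
  by_contra hcon
  push_neg at hcon
  set ξ : ℕ → ℕ → C := fun k n => (f ((n : ℤ), (k : ℤ))).south with hxi
  have hreach : ∀ k : ℕ, Relation.ReflTransGen (RowStep W) (ξ 0) (ξ k) := by
    intro k
    induction k with
    | zero => exact Relation.ReflTransGen.refl
    | succ m ih =>
      refine ih.tail ⟨fun n => f ((n : ℤ), (m : ℤ)), fun n => (hf n m).1, fun n => rfl,
        fun n => ?_, fun n => ?_⟩
      · have h2 := (hf (n : ℤ) (m : ℤ)).2.2
        show _ = (f ((n : ℤ), ((m + 1 : ℕ) : ℤ))).south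
        rw [h2]
        norm_num
      · have h2 := (hf (n : ℤ) (m : ℤ)).2.1
        show _ = (f (((n + 1 : ℕ) : ℤ), (m : ℤ))).west
        rw [h2]
        norm_num
  have hfin : {η | Relation.ReflTransGen (RowStep W) (ξ 0) η}.Finite :=
    hcon (ξ 0)
  haveI := hfin.to_subtype
  obtain ⟨a, b, hab, heq⟩ := Finite.exists_ne_map_eq_of_infinite
    (fun k : ℕ => (⟨ξ k, hreach k⟩ : {η | Relation.ReflTransGen (RowStep W) (ξ 0) η}))
  have heq' : ξ a = ξ b := congrArg Subtype.val heq
  set i := min a b with hidef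
  set j := max a b with hjdef
  have hij : i < j := by omega
  have hrowN : ∀ n : ℕ, (f ((n : ℤ), (i : ℤ))).south = (f ((n : ℤ), (j : ℤ))).south := by
    intro n
    rcases le_total a b with h | h
    · obtain ⟨h1, h2⟩ : i = a ∧ j = b := ⟨by omega, by omega⟩
      rw [h1, h2]; exact congrFun heq' n
    · obtain ⟨h1, h2⟩ : i = b ∧ j = a := ⟨by omega, by omega⟩
      rw [h1, h2]; exact congrFun heq'.symm n
  obtain ⟨u, v, huv, hcq⟩ := Finite.exists_ne_map_eq_of_infinite
    (fun x : ℕ => (fun k : Fin (j - i) =>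
      (⟨f ((x : ℤ), (i : ℤ) + (k : ℕ)), (hf _ _).1⟩ : {t // t ∈ W})))
  set x1 := min u v with hx1def
  set x2 := max u v with hx2def
  have hx12 : x1 < x2 := by omega
  have hcolN : ∀ k : Fin (j - i),
      f ((x1 : ℤ), (i : ℤ) + (k : ℕ)) = f ((x2 : ℤ), (i : ℤ) + (k : ℕ)) := by
    intro k
    rcases le_total u v with h | h
    · obtain ⟨h1, h2⟩ : x1 = u ∧ x2 = v := ⟨by omega, by omega⟩
      rw [h1, h2]; exact Subtype.ext_iff.mp (congrFun hcq k)
    · obtain ⟨h1, h2⟩ : x1 = v ∧ x2 = u := ⟨by omega, by omega⟩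
      rw [h1, h2]; exact Subtype.ext_iff.mp (congrFun hcq.symm k)
  obtain ⟨h, hht, hhp⟩ := periodic_of_repeat W f hf (i : ℤ) (j : ℤ) (x1 : ℤ) (x2 : ℤ)
    (by exact_mod_cast hij) (by exact_mod_cast hx12) (by positivity)
    (fun n hn => by
      have := hrowN n.toNat
      rwa [Int.toNat_of_nonneg hn] at this)
    (fun y hy1 hy2 => by
      have hk : (y - (i : ℤ)).toNat < j - i := by omega
      have := hcolN ⟨(y - (i : ℤ)).toNat, hk⟩
      simp only [Fin.val_mk] at this
      rwa [show ((i : ℤ) + ((y - (i : ℤ)).toNat : ℕ) : ℤ) = y by omega] at this)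
  exact haper h hht hhp
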